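/- Let z ∈ ℕ have prime factorization z = p_1^{c_1} ··· p_h^{c_h} with p_1 < ... < p_h and c_i ≥ 1, let k = φ(z)/2, and let a_1 < a_2 < ... < a_k be the elements of Φ(z) := {a ∈ ℤ : 1 ≤ a ≤ z/2, gcd(a,z) = 1} in increasing order. Define α^z ∈ (ℚ \ ℤ)^{k + h(z)} by α^z_i = a_i/z for 1 ≤ i ≤ k and α^z_{k+j} = 1/p_j for 1 ≤ j ≤ h(z), where h(z) = 0 if z is prime and h(z) = h otherwise. Then ψ(α^z) = 1/z. -/

import Mathlib

open Pointwise

/-- The distance from a real number to the nearest integer. -/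
noncomputable def distToInt (x : ℝ) : ℝ := |x - round x|

/-- `h(z)` is `0` if `z` is prime, and otherwise the number of distinct prime divisors. -/
def hComposite (z : ℕ) : ℕ := if z.Prime then 0 else z.primeFactors.card

lemma distToInt_eq_min (x : ℝ) : distToInt x = min (Int.fract x) (1 - Int.fract x) :=
  abs_sub_round_eq_min x

lemma distToInt_nonneg (x : ℝ) : 0 ≤ distToInt x := abs_nonneg _

lemma distToInt_intCast (n : ℤ) : distToInt (n : ℝ) = 0 := by
  simp [distToInt]

lemma distToInt_int_add (n : ℤ) (x : ℝ) : distToInt ((n : ℝ) + x) = distToInt x := by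
  rw [distToInt_eq_min, distToInt_eq_min, Int.fract_intCast_add]

lemma distToInt_neg (x : ℝ) : distToInt (-x) = distToInt x := by
  rcases eq_or_ne (Int.fract x) 0 with hf | hf
  · have hx : x = (⌊x⌋ : ℝ) := by
      have := Int.fract_add_floor x
      rw [hf] at this
      linarith
    rw [hx, ← Int.cast_neg, distToInt_intCast, distToInt_intCast]
  · rw [distToInt_eq_min, distToInt_eq_min, Int.fract_neg hf]
    rw [min_comm]
    ring_nf
lemma distToInt_of_le_half {x : ℝ} (h0 : 0 ≤ x) (h1 : 2 * x ≤ 1) : distToInt x = x := by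
  rw [distToInt_eq_min, Int.fract_eq_self.mpr ⟨h0, by linarith⟩]
  exact min_eq_left (by linarith)

lemma distToInt_key (z : ℕ) (hz : 3 ≤ z) (m r : ℤ) (hr0 : 0 ≤ r) (hr1 : 2 * r ≤ (z : ℤ)) :
    distToInt (((m * (z : ℤ) + r : ℤ) : ℝ) / (z : ℝ)) = (r : ℝ) / (z : ℝ) := by
  have hz0 : (0 : ℝ) < (z : ℝ) := by positivity
  have heq : ((m * (z : ℤ) + r : ℤ) : ℝ) / (z : ℝ) = (m : ℝ) + (r : ℝ) / (z : ℝ) := by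
    push_cast
    field_simp
  rw [heq, distToInt_int_add, distToInt_of_le_half]
  · positivity
  · have h2 : 2 * ((r : ℝ) / (z : ℝ)) = ((2 * r : ℤ) : ℝ) / (z : ℝ) := by
      push_cast
      ring
    rw [h2, div_le_one hz0]
    exact_mod_cast hr1

theorem psi_of_extremal_vector (z : ℕ) (hz : 3 ≤ z)
    (k : ℕ) (hk : 2 * k = z.totient)
    (h : ℕ) (hh : h = hComposite z)
    (a : Fin k → ℕ) (ha : StrictMono a)
    (haran : ∀ b : ℕ, (∃ i, a i = b) ↔ 1 ≤ b ∧ 2 * b ≤ z ∧ Nat.gcd b z = 1)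
    (p : Fin h → ℕ) (hp : StrictMono p)
    (hpran : ∀ q : ℕ, (∃ j, p j = q) ↔ q ∈ z.primeFactors)
    (α : Fin (k + h) → ℝ)
    (hα1 : ∀ i : Fin k, α (Fin.castAdd h i) = (a i : ℝ) / (z : ℝ))
    (hα2 : ∀ j : Fin h, α (Fin.natAdd k j) = 1 / (p j : ℝ)) :
    (⨆ Q : ℤ, ⨅ i, distToInt ((Q : ℝ) * α i)) = 1 / (z : ℝ) := by
  have hz0 : 0 < z := by omega
  have hzR : (0 : ℝ) < (z : ℝ) := by positivity
  have hk1 : 1 ≤ k := by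
    have := Nat.totient_pos.mpr hz0
    omega
  have hne : Nonempty (Fin (k + h)) := ⟨⟨0, by omega⟩⟩
  -- The index of the element `a i = 1`
  obtain ⟨i1, hi1⟩ := (haran 1).mpr ⟨le_refl 1, by omega, Nat.gcd_one_left z⟩
  -- Upper bound: every value is ≤ 1/z
  have hub : ∀ Q : ℤ, (⨅ i, distToInt ((Q : ℝ) * α i)) ≤ 1 / (z : ℝ) := by
    intro Q
    have hbdd : BddBelow (Set.range fun i => distToInt ((Q : ℝ) * α i)) := by
      refine ⟨0, ?_⟩
      rintro x ⟨i, rfl⟩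
      exact distToInt_nonneg _
    by_cases hg : Int.gcd Q (z : ℤ) = 1
    · -- coprime case
      set u := Int.gcdA Q (z : ℤ) with hu
      set v := Int.gcdB Q (z : ℤ) with hv
      have hbez : Q * u + (z : ℤ) * v = 1 := by
        have := Int.gcd_eq_gcd_ab Q (z : ℤ)
        rw [hg] at this
        exact_mod_cast this.symm
      set b : ℤ := u % (z : ℤ) with hbdef
      have hzZ : (0 : ℤ) < (z : ℤ) := by exact_mod_cast hz0
      have hb0 : 0 ≤ b := Int.emod_nonneg u (by omega)
      have hblt : b < (z : ℤ) := Int.emod_lt_of_pos u hzZ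
      have hdvd : (z : ℤ) ∣ Q * b - 1 := by
        refine ⟨-Q * (u / (z : ℤ)) - v, ?_⟩
        rw [hbdef, Int.emod_def]
        linear_combination hbez
      obtain ⟨w, hw⟩ := hdvd
      have hbne : b ≠ 0 := by
        intro h0
        rw [h0, mul_zero, zero_sub] at hw
        have hd : (z : ℤ) ∣ (-1 : ℤ) := ⟨w, hw⟩
        have := Int.le_of_dvd (by norm_num) ((dvd_neg).mp hd)
        omega
      have hcop : IsCoprime b (z : ℤ) := ⟨Q, -w, by linear_combination hw⟩
      have hgcdb : Nat.gcd b.toNat z = 1 := by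
        have h1 : Int.gcd b (z : ℤ) = 1 := Int.isCoprime_iff_gcd_eq_one.mp hcop
        have h2 : b.natAbs = b.toNat := by omega
        rwa [Int.gcd, Int.natAbs_natCast, h2] at h1
      by_cases hb2 : 2 * b ≤ (z : ℤ)
      · -- use a_i = b
        obtain ⟨i, hi⟩ := (haran b.toNat).mpr ⟨by omega, by omega, hgcdb⟩
        refine le_trans (ciInf_le hbdd (Fin.castAdd h i)) ?_
        rw [hα1 i, hi]
        have hcast : ((b.toNat : ℕ) : ℝ) = ((b : ℤ) : ℝ) := by
          rw [← Int.cast_natCast, Int.toNat_of_nonneg hb0]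
        rw [hcast]
        have heq : (Q : ℝ) * (((b : ℤ) : ℝ) / (z : ℝ)) = ((w * (z : ℤ) + 1 : ℤ) : ℝ) / (z : ℝ) := by
          have : Q * b = w * (z : ℤ) + 1 := by linarith [hw]
          push_cast [← this]
          ring
        rw [heq, distToInt_key z hz w 1 (by norm_num) (by omega)]
        norm_num
      · -- use a_i = z - b
        push_neg at hb2
        set b' : ℤ := (z : ℤ) - b with hb'def
        have hb'0 : 0 < b' := by omega
        have hb'2 : 2 * b' ≤ (z : ℤ) := by omega
        have hcop' : IsCoprime b' (z : ℤ) := ⟨-Q, Q - w, by linear_combination hw⟩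
        have hgcdb' : Nat.gcd b'.toNat z = 1 := by
          have h1 : Int.gcd b' (z : ℤ) = 1 := Int.isCoprime_iff_gcd_eq_one.mp hcop'
          have h2 : b'.natAbs = b'.toNat := by omega
          rwa [Int.gcd, Int.natAbs_natCast, h2] at h1
        obtain ⟨i, hi⟩ := (haran b'.toNat).mpr ⟨by omega, by omega, hgcdb'⟩
        refine le_trans (ciInf_le hbdd (Fin.castAdd h i)) ?_
        rw [hα1 i, hi]
        have hcast : ((b'.toNat : ℕ) : ℝ) = ((b' : ℤ) : ℝ) := by
          rw [← Int.cast_natCast, Int.toNat_of_nonneg (le_of_lt hb'0)]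
        rw [hcast]
        have hQb' : -(Q * b') = (w - Q) * (z : ℤ) + 1 := by
          rw [hb'def]
          linear_combination hw
        have heq : (Q : ℝ) * (((b' : ℤ) : ℝ) / (z : ℝ)) =
            -((((w - Q) * (z : ℤ) + 1 : ℤ) : ℝ) / (z : ℝ)) := by
          push_cast [← hQb']
          push_cast
          ring
        rw [heq, distToInt_neg, distToInt_key z hz (w - Q) 1 (by norm_num) (by omega)]
        norm_num
    · -- non-coprime case
      set g := Int.gcd Q (z : ℤ) with hgdef
      have hgz : g ∣ z := by
        have h1 : ((g : ℕ) : ℤ) ∣ ((z : ℕ) : ℤ) := Int.gcd_dvd_right Q (z : ℤ)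
        exact_mod_cast h1
      have hg0 : g ≠ 0 := by
        intro h0
        have := Nat.eq_zero_of_zero_dvd (h0 ▸ hgz)
        omega
      have hg2 : 2 ≤ g := by
        rcases Nat.lt_or_ge g 2 with h2 | h2
        · interval_cases g <;> simp_all
        · exact h2
      set q := g.minFac with hq
      have hqp : q.Prime := Nat.minFac_prime (by omega)
      have hqg : q ∣ g := Nat.minFac_dvd g
      have hqz : q ∣ z := hqg.trans hgz
      have hqQ : (q : ℤ) ∣ Q := by
        have h1 : ((g : ℕ) : ℤ) ∣ Q := Int.gcd_dvd_left Q (z : ℤ)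
        exact (Int.natCast_dvd_natCast.mpr hqg).trans h1
      by_cases hzp : z.Prime
      · -- z prime: q = z, so z ∣ Q; use a_{i1} = 1
        have hqeq : q = z := ((Nat.prime_dvd_prime_iff_eq hqp hzp).mp hqz)
        obtain ⟨t, ht⟩ := hqeq ▸ hqQ
        refine le_trans (ciInf_le hbdd (Fin.castAdd h i1)) ?_
        rw [hα1 i1, hi1]
        have heq : (Q : ℝ) * (((1 : ℕ) : ℝ) / (z : ℝ)) = ((t : ℤ) : ℝ) := by
          rw [ht]
          push_cast
          field_simp
        rw [heq, distToInt_intCast]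
        positivity
      · -- z composite: q is one of the p j
        obtain ⟨j, hj⟩ := (hpran q).mpr (Nat.mem_primeFactors.mpr ⟨hqp, hqz, by omega⟩)
        obtain ⟨t, ht⟩ := hqQ
        refine le_trans (ciInf_le hbdd (Fin.natAdd k j)) ?_
        rw [hα2 j, hj]
        have hq0 : (0 : ℝ) < (q : ℝ) := by exact_mod_cast hqp.pos
        have heq : (Q : ℝ) * (1 / (q : ℝ)) = ((t : ℤ) : ℝ) := by
          rw [ht]
          push_cast
          field_simp
        rw [heq, distToInt_intCast]
        positivity
  -- conclude
  refine le_antisymm (ciSup_le hub) ?_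
  have hbAbove : BddAbove (Set.range fun Q : ℤ => ⨅ i, distToInt ((Q : ℝ) * α i)) := by
    refine ⟨1 / (z : ℝ), ?_⟩
    rintro x ⟨Q, rfl⟩
    exact hub Q
  refine le_trans ?_ (le_ciSup hbAbove (1 : ℤ))
  refine le_ciInf ?_
  intro i
  refine Fin.addCases ?_ ?_ i
  · intro i'
    rw [hα1 i']
    obtain ⟨h1, h2, -⟩ := (haran (a i')).mp ⟨i', rfl⟩
    have ha1 : (1 : ℝ) ≤ (a i' : ℝ) := by exact_mod_cast h1
    have ha2 : 2 * (a i' : ℝ) ≤ (z : ℝ) := by exact_mod_cast h2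
    have heq : distToInt ((1 : ℤ) * ((a i' : ℝ) / (z : ℝ))) = (a i' : ℝ) / (z : ℝ) := by
      rw [Int.cast_one, one_mul]
      refine distToInt_of_le_half (by positivity) ?_
      have h3 : 2 * ((a i' : ℝ) / (z : ℝ)) = (2 * (a i' : ℝ)) / (z : ℝ) := by ring
      rw [h3, div_le_one hzR]
      linarith
    rw [heq]
    gcongr
  · intro j
    rw [hα2 j]
    have hmem := (hpran (p j)).mp ⟨j, rfl⟩
    obtain ⟨hpp, hpd, -⟩ := Nat.mem_primeFactors.mp hmem
    have hple : p j ≤ z := Nat.le_of_dvd hz0 hpd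
    have hp2 : 2 ≤ p j := hpp.two_le
    have hpR : (0 : ℝ) < (p j : ℝ) := by
      have : 0 < p j := by omega
      exact_mod_cast this
    have heq : distToInt ((1 : ℤ) * (1 / (p j : ℝ))) = 1 / (p j : ℝ) := by
      rw [Int.cast_one, one_mul]
      refine distToInt_of_le_half (by positivity) ?_
      rw [mul_one_div, div_le_one hpR]
      exact_mod_cast hp2
    rw [heq]
    apply one_div_le_one_div_of_le hpR
    exact_mod_cast hple
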